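/- Let q > 1 be a real number. For any bipartite quantum state ρ (a positive semidefinite matrix with trace 1) on a finite-dimensional bipartite Hilbert space ℂ^{d₁} ⊗ ℂ^{d₂} (i.e., a positive semidefinite matrix indexed by (Fin d₁ × Fin d₂) with trace 1), the inequality 1 + ‖ρ‖_q ≥ ‖Tr₁ρ‖_q + ‖Tr₂ρ‖_q holds. -/

import Mathlib

open Matrix ComplexOrder Kronecker

/-- `Tr[A^q]` for a Hermitian matrix `A`, where `A^q` is the matrix power obtained by raising
each eigenvalue of `A` to the (real) power `q`; defined as `0` if `A` is not Hermitian. -/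
noncomputable def traceRpow {d : Type*} [Fintype d] [DecidableEq d]
    (q : ℝ) (A : Matrix d d ℂ) : ℝ :=
  if hA : A.IsHermitian then ∑ i, hA.eigenvalues i ^ q else 0

/-- The Schatten `q`-norm `‖A‖_q = (Tr[A^q])^{1/q}` of a positive semidefinite matrix `A`. -/
noncomputable def schattenNorm {d : Type*} [Fintype d] [DecidableEq d]
    (q : ℝ) (A : Matrix d d ℂ) : ℝ :=
  traceRpow q A ^ (1 / q)

/-- The partial trace over the first tensor factor: `(Tr₁ρ)(j,j') = ∑ i, ρ((i,j),(i,j'))`. -/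
noncomputable def ptrace1 {d₁ d₂ : ℕ}
    (ρ : Matrix (Fin d₁ × Fin d₂) (Fin d₁ × Fin d₂) ℂ) : Matrix (Fin d₂) (Fin d₂) ℂ :=
  Matrix.of fun j j' => ∑ i, ρ (i, j) (i, j')

/-- The partial trace over the second tensor factor: `(Tr₂ρ)(i,i') = ∑ j, ρ((i,j),(i',j'))`. -/
noncomputable def ptrace2 {d₁ d₂ : ℕ}
    (ρ : Matrix (Fin d₁ × Fin d₂) (Fin d₁ × Fin d₂) ℂ) : Matrix (Fin d₁) (Fin d₁) ℂ :=
  Matrix.of fun i i' => ∑ j, ρ (i, j) (i', j)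

namespace Aud


variable {n : Type*} [Fintype n] [DecidableEq n]

lemma trace_dWeW (d e : n → ℂ) (W : Matrix n n ℂ) :
    (diagonal d * W * diagonal e * Wᴴ).trace
      = ∑ i, ∑ j, d i * e j * (W i j * star (W i j)) := by
  have h : ∀ i j, (diagonal d * W * diagonal e) i j = d i * W i j * e j := by
    intro i j; rw [mul_diagonal, diagonal_mul]
  rw [Matrix.trace]
  simp only [Matrix.diag_apply, Matrix.mul_apply, h, Matrix.conjTranspose_apply]
  refine Finset.sum_congr rfl fun i _ => Finset.sum_congr rfl fun j _ => by ring

lemma trace_formula (d e : n → ℂ) (U V : Matrix n n ℂ) :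
    ((U * diagonal d * Uᴴ) * (V * diagonal e * Vᴴ)).trace
      = ∑ i, ∑ j, d i * e j * ((Uᴴ * V) i j * star ((Uᴴ * V) i j)) := by
  have h1 : (U * diagonal d * Uᴴ) * (V * diagonal e * Vᴴ)
      = U * (diagonal d * (Uᴴ * V) * diagonal e * Vᴴ) := by
    simp only [Matrix.mul_assoc]
  rw [h1, Matrix.trace_mul_comm]
  have h2 : diagonal d * (Uᴴ * V) * diagonal e * Vᴴ * U
      = diagonal d * (Uᴴ * V) * diagonal e * (Uᴴ * V)ᴴ := by
    rw [conjTranspose_mul, conjTranspose_conjTranspose, Matrix.mul_assoc]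
  rw [h2, trace_dWeW]



variable {n : Type*} [Fintype n] [DecidableEq n]

lemma row_sum_one {W : Matrix n n ℂ} (h : W * Wᴴ = 1) (i : n) :
    ∑ j, W i j * star (W i j) = 1 := by
  have := congrFun (congrFun h i) i
  simpa [Matrix.mul_apply, Matrix.conjTranspose_apply, Matrix.one_apply] using this

lemma col_sum_one {W : Matrix n n ℂ} (h : Wᴴ * W = 1) (j : n) :
    ∑ i, W i j * star (W i j) = 1 := by
  have := congrFun (congrFun h j) j
  simp only [Matrix.mul_apply, Matrix.conjTranspose_apply, Matrix.one_apply, if_pos] at this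
  simp only [← this]
  exact Finset.sum_congr rfl fun i _ => by ring

lemma conjTranspose_kron {l m o p' : Type*} (A : Matrix l m ℂ) (B : Matrix o p' ℂ) :
    (A ⊗ₖ B)ᴴ = Aᴴ ⊗ₖ Bᴴ := by
  ext ⟨i, j⟩ ⟨k, l⟩
  simp [conjTranspose_apply, mul_comm]

lemma kron_unitary {m : Type*} [Fintype m] [DecidableEq m]
    {U : Matrix n n ℂ} {V : Matrix m m ℂ}
    (hU : U ∈ Matrix.unitaryGroup n ℂ) (hV : V ∈ Matrix.unitaryGroup m ℂ) :
    U ⊗ₖ V ∈ Matrix.unitaryGroup (n × m) ℂ := by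
  rw [Matrix.mem_unitaryGroup_iff] at hU hV ⊢
  rw [Matrix.star_eq_conjTranspose] at hU hV ⊢
  rw [conjTranspose_kron, ← Matrix.mul_kronecker_mul, hU, hV, Matrix.one_kronecker_one]

lemma sub_kron {l m o p' : Type*} (A B : Matrix l m ℂ) (C : Matrix o p' ℂ) :
    (A - B) ⊗ₖ C = A ⊗ₖ C - B ⊗ₖ C := by
  ext ⟨i, j⟩ ⟨k, l⟩; simp [sub_mul]

lemma kron_sub {l m o p' : Type*} (A : Matrix l m ℂ) (B C : Matrix o p' ℂ) :
    A ⊗ₖ (B - C) = A ⊗ₖ B - A ⊗ₖ C := by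
  ext ⟨i, j⟩ ⟨k, l⟩; simp [mul_sub]



lemma holder_scalar {ι κ : Type*} [Fintype ι] [Fintype κ] {p q : ℝ}
    (hpq : Real.HolderConjugate q p)
    (lam : ι → ℝ) (mu : κ → ℝ) (w : ι → κ → ℝ)
    (hlam : ∀ i, 0 ≤ lam i) (hmu : ∀ j, 0 ≤ mu j) (hw : ∀ i j, 0 ≤ w i j)
    (hrow : ∀ i, ∑ j, w i j = 1) (hcol : ∀ j, ∑ i, w i j = 1) :
    ∑ i, ∑ j, lam i * mu j * w i j
      ≤ (∑ i, lam i ^ q) ^ (1 / q) * (∑ j, mu j ^ p) ^ (1 / p) := by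
  have hq0 : q ≠ 0 := hpq.ne_zero
  have hp0 : p ≠ 0 := hpq.symm.ne_zero
  have key := Real.inner_le_Lp_mul_Lq_of_nonneg (s := (Finset.univ : Finset (ι × κ)))
      (f := fun x => lam x.1 * w x.1 x.2 ^ (1 / q))
      (g := fun x => mu x.2 * w x.1 x.2 ^ (1 / p)) hpq
      (fun x _ => mul_nonneg (hlam _) (Real.rpow_nonneg (hw _ _) _))
      (fun x _ => mul_nonneg (hmu _) (Real.rpow_nonneg (hw _ _) _))
  have e1 : ∑ x : ι × κ, (lam x.1 * w x.1 x.2 ^ (1 / q)) * (mu x.2 * w x.1 x.2 ^ (1 / p))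
      = ∑ i, ∑ j, lam i * mu j * w i j := by
    rw [Fintype.sum_prod_type]
    refine Finset.sum_congr rfl fun i _ => Finset.sum_congr rfl fun j _ => ?_
    have h : w i j ^ (1 / q) * w i j ^ (1 / p) = w i j := by
      rw [← Real.rpow_add' (hw i j) (by rw [one_div, one_div, hpq.inv_add_inv_eq_one]; norm_num)]
      rw [one_div, one_div, hpq.inv_add_inv_eq_one, Real.rpow_one]
    calc (lam i * w i j ^ (1 / q)) * (mu j * w i j ^ (1 / p))
        = lam i * mu j * (w i j ^ (1 / q) * w i j ^ (1 / p)) := by ring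
      _ = lam i * mu j * w i j := by rw [h]
  have e2 : ∑ x : ι × κ, (lam x.1 * w x.1 x.2 ^ (1 / q)) ^ q = ∑ i, lam i ^ q := by
    rw [Fintype.sum_prod_type]
    refine Finset.sum_congr rfl fun i _ => ?_
    have h : ∀ j : κ, (lam i * w i j ^ (1 / q)) ^ q = lam i ^ q * w i j := by
      intro j
      rw [Real.mul_rpow (hlam i) (Real.rpow_nonneg (hw i j) _),
        ← Real.rpow_mul (hw i j), one_div, inv_mul_cancel₀ hq0, Real.rpow_one]
    simp_rw [h, ← Finset.mul_sum, hrow i, mul_one]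
  have e3 : ∑ x : ι × κ, (mu x.2 * w x.1 x.2 ^ (1 / p)) ^ p = ∑ j, mu j ^ p := by
    rw [Fintype.sum_prod_type, Finset.sum_comm]
    refine Finset.sum_congr rfl fun j _ => ?_
    have h : ∀ i : ι, (mu j * w i j ^ (1 / p)) ^ p = mu j ^ p * w i j := by
      intro i
      rw [Real.mul_rpow (hmu j) (Real.rpow_nonneg (hw i j) _),
        ← Real.rpow_mul (hw i j), one_div, inv_mul_cancel₀ hp0, Real.rpow_one]
    simp_rw [h, ← Finset.mul_sum, hcol j, mul_one]
  rw [e1, e2, e3] at key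
  exact key


variable {n : Type*} [Fintype n] [DecidableEq n]

/-- The trace of `ρ * (V diag(μ) Vᴴ)` as a real sum, for `ρ` PSD. -/
lemma trace_mul_decomp {ρ : Matrix n n ℂ} (hρ : ρ.PosSemidef)
    (V : Matrix n n ℂ) (mu : n → ℝ) :
    (ρ * (V * diagonal (fun j => (mu j : ℂ)) * Vᴴ)).trace
      = ((∑ i, ∑ j, hρ.1.eigenvalues i * mu j *
          Complex.normSq (((hρ.1.eigenvectorUnitary : Matrix n n ℂ)ᴴ * V) i j) : ℝ) : ℂ) := by
  conv_lhs => rw [hρ.1.spectral_theorem, Unitary.conjStarAlgAut_apply]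
  rw [show (star (hρ.1.eigenvectorUnitary : Matrix n n ℂ)) =
      (hρ.1.eigenvectorUnitary : Matrix n n ℂ)ᴴ from Matrix.star_eq_conjTranspose _]
  rw [trace_formula]
  push_cast
  refine Finset.sum_congr rfl fun i _ => Finset.sum_congr rfl fun j _ => ?_
  simp [Function.comp, Complex.star_def, Complex.mul_conj]

/-- Nonnegativity of the trace against a PSD-decomposed matrix. -/
lemma trace_mul_decomp_re_nonneg {ρ : Matrix n n ℂ} (hρ : ρ.PosSemidef)
    (V : Matrix n n ℂ) (mu : n → ℝ) (hmu : ∀ j, 0 ≤ mu j) :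
    0 ≤ ((ρ * (V * diagonal (fun j => (mu j : ℂ)) * Vᴴ)).trace).re := by
  rw [trace_mul_decomp hρ V mu, Complex.ofReal_re]
  refine Finset.sum_nonneg fun i _ => Finset.sum_nonneg fun j _ => ?_
  exact mul_nonneg (mul_nonneg (hρ.eigenvalues_nonneg i) (hmu j)) (Complex.normSq_nonneg _)

/-- Hölder-type bound on the trace. -/
lemma trace_mul_decomp_re_le {ρ : Matrix n n ℂ} (hρ : ρ.PosSemidef)
    {V : Matrix n n ℂ} (hV : V ∈ Matrix.unitaryGroup n ℂ) (mu : n → ℝ)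
    (hmu : ∀ j, 0 ≤ mu j) {p q : ℝ} (hpq : Real.HolderConjugate q p) :
    ((ρ * (V * diagonal (fun j => (mu j : ℂ)) * Vᴴ)).trace).re
      ≤ (∑ i, hρ.1.eigenvalues i ^ q) ^ (1 / q) * (∑ j, mu j ^ p) ^ (1 / p) := by
  rw [trace_mul_decomp hρ V mu, Complex.ofReal_re]
  set U : Matrix n n ℂ := (hρ.1.eigenvectorUnitary : Matrix n n ℂ) with hU
  have hUmem : U ∈ Matrix.unitaryGroup n ℂ := hρ.1.eigenvectorUnitary.2
  set W : Matrix n n ℂ := Uᴴ * V with hW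
  have hWW : W * Wᴴ = 1 := by
    rw [hW, conjTranspose_mul, conjTranspose_conjTranspose, Matrix.mul_assoc,
      ← Matrix.mul_assoc V, show V * Vᴴ = 1 by
        rw [← Matrix.star_eq_conjTranspose]; exact Matrix.mem_unitaryGroup_iff.mp hV,
      Matrix.one_mul, show Uᴴ * U = 1 by
        rw [← Matrix.star_eq_conjTranspose]; exact Matrix.mem_unitaryGroup_iff'.mp hUmem]
  have hWW' : Wᴴ * W = 1 := by
    rw [hW, conjTranspose_mul, conjTranspose_conjTranspose, Matrix.mul_assoc,
      ← Matrix.mul_assoc U, show U * Uᴴ = 1 by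
        rw [← Matrix.star_eq_conjTranspose]; exact Matrix.mem_unitaryGroup_iff.mp hUmem,
      Matrix.one_mul, show Vᴴ * V = 1 by
        rw [← Matrix.star_eq_conjTranspose]; exact Matrix.mem_unitaryGroup_iff'.mp hV]
  refine holder_scalar hpq _ _ (fun i j => Complex.normSq (W i j))
    (fun i => hρ.eigenvalues_nonneg i) hmu (fun i j => Complex.normSq_nonneg _) ?_ ?_
  · intro i
    have := row_sum_one hWW i
    have h2 : ∀ j, W i j * star (W i j) = ((Complex.normSq (W i j) : ℝ) : ℂ) := fun j => by
      rw [Complex.star_def, Complex.mul_conj]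
    rw [Finset.sum_congr rfl (fun j _ => h2 j)] at this
    exact_mod_cast this
  · intro j
    have := col_sum_one hWW' j
    have h2 : ∀ i, W i j * star (W i j) = ((Complex.normSq (W i j) : ℝ) : ℂ) := fun i => by
      rw [Complex.star_def, Complex.mul_conj]
    rw [Finset.sum_congr rfl (fun i _ => h2 i)] at this
    exact_mod_cast this

/-- Trace equals the sum of eigenvalues. -/
lemma trace_eq_sum_eig {σ : Matrix n n ℂ} (hσ : σ.IsHermitian) :
    σ.trace = ((∑ i, hσ.eigenvalues i : ℝ) : ℂ) := by
  conv_lhs => rw [hσ.spectral_theorem, Unitary.conjStarAlgAut_apply]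
  rw [Matrix.trace_mul_cycle, Unitary.coe_star_mul_self, Matrix.one_mul, Matrix.trace_diagonal]
  push_cast
  rfl

/-- Existence of the dual vector achieving the Schatten norm. -/
lemma exists_dual {σ : Matrix n n ℂ} (hσ : σ.PosSemidef) (htr : σ.trace = 1)
    {p q : ℝ} (hpq : Real.HolderConjugate q p) :
    ∃ a : n → ℝ, (∀ i, 0 ≤ a i) ∧ (∀ i, a i ≤ 1) ∧ (∑ i, a i ^ p = 1) ∧
      (∑ i, hσ.1.eigenvalues i * a i = (∑ i, hσ.1.eigenvalues i ^ q) ^ (1 / q)) := by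
  have hq0 : q ≠ 0 := hpq.ne_zero
  have hp0 : p ≠ 0 := hpq.symm.ne_zero
  set lam := hσ.1.eigenvalues with hlam
  have hlam0 : ∀ i, 0 ≤ lam i := fun i => hσ.eigenvalues_nonneg i
  have hsum : ∑ i, lam i = 1 := by
    have := trace_eq_sum_eig hσ.1
    rw [htr] at this
    exact_mod_cast this.symm
  set S := ∑ i, lam i ^ q with hS
  have hSnn : ∀ i, 0 ≤ lam i ^ q := fun i => Real.rpow_nonneg (hlam0 i) q
  have hSpos : 0 < S := by
    by_contra hc
    push_neg at hc
    have hS0 : S = 0 := le_antisymm hc (Finset.sum_nonneg fun i _ => hSnn i)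
    have : ∀ i ∈ Finset.univ, lam i ^ q = 0 :=
      (Finset.sum_eq_zero_iff_of_nonneg (fun i _ => hSnn i)).mp hS0
    have hz : ∀ i, lam i = 0 := fun i => by
      have h := this i (Finset.mem_univ i)
      rcases (Real.rpow_eq_zero (hlam0 i) hq0).mp h with h'
      exact h'
    rw [Finset.sum_congr rfl (fun i _ => hz i)] at hsum
    simp at hsum
  have hqp : (q - 1) * p = q := by
    have h := hpq.inv_add_inv_eq_one
    have hq0' : q ≠ 0 := hq0
    have hp0' : p ≠ 0 := hp0
    field_simp at h ⊢
    linarith [h]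
  refine ⟨fun i => lam i ^ (q - 1) / S ^ (1 / p), ?_, ?_, ?_, ?_⟩
  · intro i
    exact div_nonneg (Real.rpow_nonneg (hlam0 i) _) (Real.rpow_nonneg hSpos.le _)
  · intro i
    have hap : (lam i ^ (q - 1) / S ^ (1 / p)) ^ p = lam i ^ q / S := by
      rw [Real.div_rpow (Real.rpow_nonneg (hlam0 i) _) (Real.rpow_nonneg hSpos.le _),
        ← Real.rpow_mul (hlam0 i), ← Real.rpow_mul hSpos.le, hqp, one_div,
        inv_mul_cancel₀ hp0, Real.rpow_one]
    have hle : (lam i ^ (q - 1) / S ^ (1 / p)) ^ p ≤ 1 := by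
      rw [hap, div_le_one hSpos]
      exact Finset.single_le_sum (fun j _ => hSnn j) (Finset.mem_univ i)
    have h0 : 0 ≤ lam i ^ (q - 1) / S ^ (1 / p) :=
      div_nonneg (Real.rpow_nonneg (hlam0 i) _) (Real.rpow_nonneg hSpos.le _)
    have := Real.rpow_le_one (Real.rpow_nonneg h0 p) hle (by have h1p := hpq.symm.lt; positivity : (0:ℝ) ≤ 1/p)
    calc lam i ^ (q - 1) / S ^ (1 / p)
        = ((lam i ^ (q - 1) / S ^ (1 / p)) ^ p) ^ (1 / p) := by
          rw [← Real.rpow_mul h0, mul_one_div, div_self hp0, Real.rpow_one]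
      _ ≤ 1 := this
  · have hap : ∀ i, (lam i ^ (q - 1) / S ^ (1 / p)) ^ p = lam i ^ q / S := fun i => by
      rw [Real.div_rpow (Real.rpow_nonneg (hlam0 i) _) (Real.rpow_nonneg hSpos.le _),
        ← Real.rpow_mul (hlam0 i), ← Real.rpow_mul hSpos.le, hqp, one_div,
        inv_mul_cancel₀ hp0, Real.rpow_one]
    rw [Finset.sum_congr rfl (fun i _ => hap i), ← Finset.sum_div, ← hS, div_self hSpos.ne']
  · have h1 : ∀ i, lam i * (lam i ^ (q - 1) / S ^ (1 / p)) = lam i ^ q / S ^ (1 / p) := by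
      intro i
      rw [show lam i ^ q = lam i ^ (1 + (q - 1)) by norm_num,
        Real.rpow_add' (hlam0 i) (by norm_num; intro h; linarith [hpq.lt] : 1 + (q-1) ≠ 0),
        Real.rpow_one, mul_div_assoc]
    rw [Finset.sum_congr rfl (fun i _ => h1 i), ← Finset.sum_div, ← hS]
    rw [show S / S ^ (1/p) = S ^ ((1:ℝ)) / S ^ (1/p) by rw [Real.rpow_one],
      ← Real.rpow_sub hSpos]
    congr 1
    have h := hpq.inv_add_inv_eq_one
    rw [one_div, one_div]
    linarith [h]

/-- The trace of `σ` against its own dual operator. -/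
lemma trace_mul_dual {σ : Matrix n n ℂ} (hσ : σ.PosSemidef) (a : n → ℝ) :
    (σ * ((hσ.1.eigenvectorUnitary : Matrix n n ℂ) * diagonal (fun j => (a j : ℂ))
        * (hσ.1.eigenvectorUnitary : Matrix n n ℂ)ᴴ)).trace
      = ((∑ i, hσ.1.eigenvalues i * a i : ℝ) : ℂ) := by
  rw [trace_mul_decomp hσ _ a]
  norm_cast
  have hUU : (hσ.1.eigenvectorUnitary : Matrix n n ℂ)ᴴ
      * (hσ.1.eigenvectorUnitary : Matrix n n ℂ) = 1 := by
    rw [← Matrix.star_eq_conjTranspose]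
    exact Matrix.mem_unitaryGroup_iff'.mp hσ.1.eigenvectorUnitary.2
  rw [hUU]
  refine Finset.sum_congr rfl fun i _ => ?_
  rw [Finset.sum_eq_single i]
  · simp [Matrix.one_apply]
  · intro j _ hj
    simp [Matrix.one_apply, Ne.symm hj]
  · simp

end Aud

namespace Aud

variable {d₁ d₂ : ℕ}

lemma ptrace1_posSemidef {ρ : Matrix (Fin d₁ × Fin d₂) (Fin d₁ × Fin d₂) ℂ}
    (hρ : ρ.PosSemidef) : (ptrace1 ρ).PosSemidef := by
  refine Matrix.PosSemidef.of_dotProduct_mulVec_nonneg ?_ ?_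
  · show (ptrace1 ρ)ᴴ = ptrace1 ρ
    ext j j'
    have h : ∀ i : Fin d₁, star (ρ (i, j') (i, j)) = ρ (i, j) (i, j') := by
      intro i
      have := congrFun (congrFun hρ.1 (i, j)) (i, j')
      simpa [Matrix.conjTranspose_apply] using this
    simp only [Matrix.conjTranspose_apply, ptrace1, Matrix.of_apply, star_sum]
    exact Finset.sum_congr rfl fun i _ => h i
  · intro x
    have key : star x ⬝ᵥ (ptrace1 ρ) *ᵥ x
        = ∑ i : Fin d₁, star (fun y : Fin d₁ × Fin d₂ => if y.1 = i then x y.2 else 0)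
          ⬝ᵥ ρ *ᵥ (fun y : Fin d₁ × Fin d₂ => if y.1 = i then x y.2 else 0) := by
      simp only [dotProduct, mulVec, Pi.star_apply, apply_ite, star_zero,
        Fintype.sum_prod_type, ptrace1, Matrix.of_apply]
      simp only [ite_mul, zero_mul, mul_ite, mul_zero]
      simp only [Finset.sum_ite_irrel, Finset.sum_const_zero, Finset.sum_ite_eq,
        Finset.sum_ite_eq', Finset.mem_univ, if_true]
      simp_rw [Finset.sum_mul, Finset.mul_sum]
      refine Eq.trans (Finset.sum_congr rfl fun x1 _ => Finset.sum_comm)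
        (Eq.trans Finset.sum_comm ?_)
      exact Finset.sum_congr rfl fun i _ => Finset.sum_congr rfl fun j _ =>
        Finset.sum_congr rfl fun j' _ => by ring
    rw [key]
    exact Finset.sum_nonneg fun i _ => hρ.dotProduct_mulVec_nonneg _

lemma ptrace2_posSemidef {ρ : Matrix (Fin d₁ × Fin d₂) (Fin d₁ × Fin d₂) ℂ}
    (hρ : ρ.PosSemidef) : (ptrace2 ρ).PosSemidef := by
  refine Matrix.PosSemidef.of_dotProduct_mulVec_nonneg ?_ ?_
  · show (ptrace2 ρ)ᴴ = ptrace2 ρ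
    ext i i'
    have h : ∀ j : Fin d₂, star (ρ (i', j) (i, j)) = ρ (i, j) (i', j) := by
      intro j
      have := congrFun (congrFun hρ.1 (i, j)) (i', j)
      simpa [Matrix.conjTranspose_apply] using this
    simp only [Matrix.conjTranspose_apply, ptrace2, Matrix.of_apply, star_sum]
    exact Finset.sum_congr rfl fun j _ => h j
  · intro x
    have key : star x ⬝ᵥ (ptrace2 ρ) *ᵥ x
        = ∑ j : Fin d₂, star (fun y : Fin d₁ × Fin d₂ => if y.2 = j then x y.1 else 0)
          ⬝ᵥ ρ *ᵥ (fun y : Fin d₁ × Fin d₂ => if y.2 = j then x y.1 else 0) := by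
      simp only [dotProduct, mulVec, Pi.star_apply, apply_ite, star_zero,
        Fintype.sum_prod_type, ptrace2, Matrix.of_apply]
      simp only [ite_mul, zero_mul, mul_ite, mul_zero]
      simp only [Finset.sum_ite_irrel, Finset.sum_const_zero, Finset.sum_ite_eq,
        Finset.sum_ite_eq', Finset.mem_univ, if_true]
      simp_rw [Finset.sum_mul, Finset.mul_sum]
      exact Eq.trans (Finset.sum_congr rfl fun _ _ => Finset.sum_comm) Finset.sum_comm
    rw [key]
    exact Finset.sum_nonneg fun j _ => hρ.dotProduct_mulVec_nonneg _

lemma ptrace1_trace (ρ : Matrix (Fin d₁ × Fin d₂) (Fin d₁ × Fin d₂) ℂ) :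
    (ptrace1 ρ).trace = ρ.trace := by
  simp only [Matrix.trace, Matrix.diag_apply, ptrace1, Matrix.of_apply,
    Fintype.sum_prod_type]
  exact Finset.sum_comm

lemma ptrace2_trace (ρ : Matrix (Fin d₁ × Fin d₂) (Fin d₁ × Fin d₂) ℂ) :
    (ptrace2 ρ).trace = ρ.trace := by
  simp only [Matrix.trace, Matrix.diag_apply, ptrace2, Matrix.of_apply,
    Fintype.sum_prod_type]

lemma trace_mul_one_kron (ρ : Matrix (Fin d₁ × Fin d₂) (Fin d₁ × Fin d₂) ℂ)
    (A : Matrix (Fin d₂) (Fin d₂) ℂ) :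
    (ρ * ((1 : Matrix (Fin d₁) (Fin d₁) ℂ) ⊗ₖ A)).trace = (ptrace1 ρ * A).trace := by
  simp only [Matrix.trace, Matrix.diag_apply, Matrix.mul_apply, kroneckerMap_apply,
    ptrace1, Matrix.of_apply, Fintype.sum_prod_type, Matrix.one_apply]
  simp only [ite_mul, one_mul, zero_mul, mul_ite, mul_zero, Finset.sum_ite_irrel,
    Finset.sum_const_zero, Finset.sum_ite_eq, Finset.sum_ite_eq', Finset.mem_univ, if_true,
    Finset.sum_mul]
  exact Eq.trans Finset.sum_comm (Finset.sum_congr rfl fun _ _ => Finset.sum_comm)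

lemma trace_mul_kron_one (ρ : Matrix (Fin d₁ × Fin d₂) (Fin d₁ × Fin d₂) ℂ)
    (B : Matrix (Fin d₁) (Fin d₁) ℂ) :
    (ρ * (B ⊗ₖ (1 : Matrix (Fin d₂) (Fin d₂) ℂ))).trace = (ptrace2 ρ * B).trace := by
  simp only [Matrix.trace, Matrix.diag_apply, Matrix.mul_apply, kroneckerMap_apply,
    ptrace2, Matrix.of_apply, Fintype.sum_prod_type, Matrix.one_apply]
  simp only [mul_ite, mul_zero, mul_one, Finset.sum_ite_irrel, Finset.sum_const_zero,
    Finset.sum_ite_eq, Finset.sum_ite_eq', Finset.mem_univ, if_true, Finset.sum_mul]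
  exact Finset.sum_congr rfl fun _ _ => Finset.sum_comm

end Aud

/-- **Theorem 1 (Audenaert).** For `q > 1` and any bipartite state `ρ` on `ℂ^{d₁} ⊗ ℂ^{d₂}`,
`1 + ‖ρ‖_q ≥ ‖Tr₁ρ‖_q + ‖Tr₂ρ‖_q`. -/
theorem schattenNorm_partial_traces_le {d₁ d₂ : ℕ} (q : ℝ) (hq : 1 < q)
    (ρ : Matrix (Fin d₁ × Fin d₂) (Fin d₁ × Fin d₂) ℂ)
    (hρ : ρ.PosSemidef) (htr : ρ.trace = 1) :
    schattenNorm q (ptrace1 ρ) + schattenNorm q (ptrace2 ρ) ≤ 1 + schattenNorm q ρ := by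
  classical
  set p := q / (q - 1) with hpdef
  have hpq : Real.HolderConjugate q p := Real.HolderConjugate.conjExponent hq
  have hσ₁ : (ptrace1 ρ).PosSemidef := Aud.ptrace1_posSemidef hρ
  have hσ₂ : (ptrace2 ρ).PosSemidef := Aud.ptrace2_posSemidef hρ
  have htr₁ : (ptrace1 ρ).trace = 1 := by rw [Aud.ptrace1_trace, htr]
  have htr₂ : (ptrace2 ρ).trace = 1 := by rw [Aud.ptrace2_trace, htr]
  obtain ⟨a, ha0, ha1, hap, haval⟩ := Aud.exists_dual hσ₁ htr₁ hpq
  obtain ⟨b, hb0, hb1, hbp, hbval⟩ := Aud.exists_dual hσ₂ htr₂ hpq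
  set U₁ : Matrix (Fin d₂) (Fin d₂) ℂ := (hσ₁.1.eigenvectorUnitary : Matrix (Fin d₂) (Fin d₂) ℂ) with hU₁
  set U₂ : Matrix (Fin d₁) (Fin d₁) ℂ := (hσ₂.1.eigenvectorUnitary : Matrix (Fin d₁) (Fin d₁) ℂ) with hU₂
  have hU₁mem : U₁ ∈ Matrix.unitaryGroup (Fin d₂) ℂ := hσ₁.1.eigenvectorUnitary.2
  have hU₂mem : U₂ ∈ Matrix.unitaryGroup (Fin d₁) ℂ := hσ₂.1.eigenvectorUnitary.2
  set A : Matrix (Fin d₂) (Fin d₂) ℂ := U₁ * diagonal (fun j => (a j : ℂ)) * U₁ᴴ with hA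
  set B : Matrix (Fin d₁) (Fin d₁) ℂ := U₂ * diagonal (fun i => (b i : ℂ)) * U₂ᴴ with hB
  -- Step A : schattenNorm of the partial traces are realized
  have schval₁ : schattenNorm q (ptrace1 ρ) = ((ptrace1 ρ * A).trace).re := by
    rw [hA, hU₁, Aud.trace_mul_dual hσ₁ a, Complex.ofReal_re, haval]
    rw [schattenNorm, traceRpow, dif_pos hσ₁.1]
  have schval₂ : schattenNorm q (ptrace2 ρ) = ((ptrace2 ρ * B).trace).re := by
    rw [hB, hU₂, Aud.trace_mul_dual hσ₂ b, Complex.ofReal_re, hbval]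
    rw [schattenNorm, traceRpow, dif_pos hσ₂.1]
  -- rewrite as traces against ρ
  have t1 : ((ptrace1 ρ * A).trace).re = ((ρ * ((1 : Matrix (Fin d₁) (Fin d₁) ℂ) ⊗ₖ A)).trace).re := by
    rw [Aud.trace_mul_one_kron]
  have t2 : ((ptrace2 ρ * B).trace).re = ((ρ * (B ⊗ₖ (1 : Matrix (Fin d₂) (Fin d₂) ℂ))).trace).re := by
    rw [Aud.trace_mul_kron_one]
  -- Step C : operator inequality
  have hBA : B ⊗ₖ A = (U₂ ⊗ₖ U₁) * diagonal (fun x : Fin d₁ × Fin d₂ => ((b x.1 * a x.2 : ℝ) : ℂ))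
      * (U₂ ⊗ₖ U₁)ᴴ := by
    rw [hA, hB, Aud.conjTranspose_kron, Matrix.mul_kronecker_mul, Matrix.mul_kronecker_mul,
      Matrix.diagonal_kronecker_diagonal]
    congr 2
    funext x
    push_cast
    rfl
  have h1B : (1 : Matrix (Fin d₁) (Fin d₁) ℂ) - B
      = U₂ * diagonal (fun i => ((1 - b i : ℝ) : ℂ)) * U₂ᴴ := by
    have : diagonal (fun i => ((1 - b i : ℝ) : ℂ)) = 1 - diagonal (fun i => (b i : ℂ)) := by
      ext i j
      by_cases h : i = j
      · subst h; simp [Matrix.diagonal_apply, Matrix.one_apply]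
      · simp [Matrix.diagonal_apply, Matrix.one_apply, h]
    rw [this, Matrix.mul_sub, Matrix.sub_mul, Matrix.mul_one, ← hB,
      show U₂ * U₂ᴴ = 1 by
        rw [← Matrix.star_eq_conjTranspose]; exact Matrix.mem_unitaryGroup_iff.mp hU₂mem]
  have h1A : (1 : Matrix (Fin d₂) (Fin d₂) ℂ) - A
      = U₁ * diagonal (fun j => ((1 - a j : ℝ) : ℂ)) * U₁ᴴ := by
    have : diagonal (fun j => ((1 - a j : ℝ) : ℂ)) = 1 - diagonal (fun j => (a j : ℂ)) := by
      ext i j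
      by_cases h : i = j
      · subst h; simp [Matrix.diagonal_apply, Matrix.one_apply]
      · simp [Matrix.diagonal_apply, Matrix.one_apply, h]
    rw [this, Matrix.mul_sub, Matrix.sub_mul, Matrix.mul_one, ← hA,
      show U₁ * U₁ᴴ = 1 by
        rw [← Matrix.star_eq_conjTranspose]; exact Matrix.mem_unitaryGroup_iff.mp hU₁mem]
  have hposM : 0 ≤ ((ρ * (((1 : Matrix (Fin d₁) (Fin d₁) ℂ) - B) ⊗ₖ
      ((1 : Matrix (Fin d₂) (Fin d₂) ℂ) - A))).trace).re := by
    have hdec : ((1 : Matrix (Fin d₁) (Fin d₁) ℂ) - B) ⊗ₖ ((1 : Matrix (Fin d₂) (Fin d₂) ℂ) - A)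
        = (U₂ ⊗ₖ U₁) * diagonal (fun x : Fin d₁ × Fin d₂ => (((1 - b x.1) * (1 - a x.2) : ℝ) : ℂ))
          * (U₂ ⊗ₖ U₁)ᴴ := by
      rw [h1B, h1A, Aud.conjTranspose_kron, Matrix.mul_kronecker_mul, Matrix.mul_kronecker_mul,
        Matrix.diagonal_kronecker_diagonal]
      congr 2
      funext x
      push_cast
      rfl
    rw [hdec]
    exact Aud.trace_mul_decomp_re_nonneg hρ _ _
      (fun x => mul_nonneg (by linarith [hb1 x.1]) (by linarith [ha1 x.2]))
  have hexp : ((1 : Matrix (Fin d₁) (Fin d₁) ℂ) - B) ⊗ₖ ((1 : Matrix (Fin d₂) (Fin d₂) ℂ) - A)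
      = (1 : Matrix (Fin d₁ × Fin d₂) (Fin d₁ × Fin d₂) ℂ)
        - (1 : Matrix (Fin d₁) (Fin d₁) ℂ) ⊗ₖ A - B ⊗ₖ (1 : Matrix (Fin d₂) (Fin d₂) ℂ)
        + B ⊗ₖ A := by
    rw [Aud.sub_kron, Aud.kron_sub, Aud.kron_sub, Matrix.one_kronecker_one]
    abel
  have hC : ((ρ * ((1 : Matrix (Fin d₁) (Fin d₁) ℂ) ⊗ₖ A)).trace).re
      + ((ρ * (B ⊗ₖ (1 : Matrix (Fin d₂) (Fin d₂) ℂ))).trace).re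
      ≤ 1 + ((ρ * (B ⊗ₖ A)).trace).re := by
    rw [hexp] at hposM
    have expand : (ρ * ((1 : Matrix (Fin d₁ × Fin d₂) (Fin d₁ × Fin d₂) ℂ)
          - (1 : Matrix (Fin d₁) (Fin d₁) ℂ) ⊗ₖ A - B ⊗ₖ (1 : Matrix (Fin d₂) (Fin d₂) ℂ)
          + B ⊗ₖ A)).trace
        = ρ.trace - (ρ * ((1 : Matrix (Fin d₁) (Fin d₁) ℂ) ⊗ₖ A)).trace
          - (ρ * (B ⊗ₖ (1 : Matrix (Fin d₂) (Fin d₂) ℂ))).trace + (ρ * (B ⊗ₖ A)).trace := by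
      rw [Matrix.mul_add, Matrix.mul_sub, Matrix.mul_sub, Matrix.mul_one,
        Matrix.trace_add, Matrix.trace_sub, Matrix.trace_sub]
    rw [expand, htr] at hposM
    simp only [Complex.add_re, Complex.sub_re, Complex.one_re] at hposM
    linarith
  -- Step E : Hölder bound
  have hE : ((ρ * (B ⊗ₖ A)).trace).re ≤ schattenNorm q ρ := by
    rw [hBA]
    have hkron : U₂ ⊗ₖ U₁ ∈ Matrix.unitaryGroup (Fin d₁ × Fin d₂) ℂ :=
      Aud.kron_unitary hU₂mem hU₁mem
    have := Aud.trace_mul_decomp_re_le hρ hkron (fun x : Fin d₁ × Fin d₂ => b x.1 * a x.2)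
      (fun x => mul_nonneg (hb0 x.1) (ha0 x.2)) hpq
    have hsum1 : ∑ x : Fin d₁ × Fin d₂, (b x.1 * a x.2) ^ p = 1 := by
      have : ∀ x : Fin d₁ × Fin d₂, (b x.1 * a x.2) ^ p = b x.1 ^ p * a x.2 ^ p := fun x =>
        Real.mul_rpow (hb0 x.1) (ha0 x.2)
      rw [Finset.sum_congr rfl (fun x _ => this x), Fintype.sum_prod_type]
      simp_rw [← Finset.mul_sum, hap, mul_one]
      exact hbp
    rw [hsum1, Real.one_rpow, mul_one] at this
    rw [schattenNorm, traceRpow, dif_pos hρ.1]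
    exact this
  rw [schval₁, schval₂, t1, t2]
  linarith
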